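/- Let b ∈ ℝ, let R ∈ ℝ^{m×n} have every entry of absolute value at most C, let K := C/(1−β), fix a state x, and for each T ≥ 1 define A_T := {π ∈ Π_MR : V_T(π,R)(x) ≤ b − Kβ^T} and B_T := {π ∈ Π_MR : J_T(π,γ,R)(x) ≤ b · exp(−|γ|Kβ^T)}. Then (A_T)_{T≥1} and (B_T)_{T≥1} are non-decreasing sequences of nested sets (A_T ⊆ A_{T+1} and B_T ⊆ B_{T+1} for all T), every π ∈ A_T satisfies V(π,R)(x) ≤ b, and every π ∈ B_T satisfies J(π,γ,R)(x) ≤ b, where J(π,γ,R)(x) := lim_{T'→∞} J_{T'}(π,γ,R)(x) (this limit exists). -/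

import Mathlib

open Finset Filter Matrix

/-- A row-stochastic matrix (decision rule): nonnegative entries, each row sums to 1. -/
def IsStoch (m n : ℕ) (d : Matrix (Fin m) (Fin n) ℝ) : Prop :=
  (∀ s a, 0 ≤ d s a) ∧ ∀ s, ∑ a, d s a = 1

/-- Valid transition probabilities `p s a s' = p(s'|s,a)`. -/
def IsTransKer (m n : ℕ) (p : Fin m → Fin n → Fin m → ℝ) : Prop :=
  (∀ s a s', 0 ≤ p s a s') ∧ ∀ s a, ∑ s', p s a s' = 1

/-- Max absolute entry norm on vectors. -/
noncomputable def vecNorm {m : ℕ} (v : Fin m → ℝ) : ℝ := ⨆ i, |v i|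

/-- Maximum absolute row-sum norm on matrices. -/
noncomputable def rowSumNorm {m n : ℕ} (B : Matrix (Fin m) (Fin n) ℝ) : ℝ :=
  ⨆ i, ∑ j, |B i j|

/-- Max absolute entry norm on matrices. -/
noncomputable def maxNorm {m n : ℕ} (B : Matrix (Fin m) (Fin n) ℝ) : ℝ :=
  ⨆ i, ⨆ j, |B i j|

/-- `(R_d)_s = ∑_a R(s,a) d(a|s)`. -/
noncomputable def Rvec {m n : ℕ} (R d : Matrix (Fin m) (Fin n) ℝ) : Fin m → ℝ :=
  fun s => ∑ a, R s a * d s a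

/-- `(P_d)_{s,s'} = ∑_a p(s'|s,a) d(a|s)`. -/
noncomputable def Pmat {m n : ℕ} (p : Fin m → Fin n → Fin m → ℝ)
    (d : Matrix (Fin m) (Fin n) ℝ) : Matrix (Fin m) (Fin m) ℝ :=
  fun s s' => ∑ a, p s a s' * d s a

/-- `P_0^π = I`, `P_{t+1}^π = P_t^π ⬝ P_{d_t}`. -/
noncomputable def Ppi {m n : ℕ} (p : Fin m → Fin n → Fin m → ℝ)
    (π : ℕ → Matrix (Fin m) (Fin n) ℝ) : ℕ → Matrix (Fin m) (Fin m) ℝ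
  | 0 => 1
  | t + 1 => Ppi p π t * Pmat p (π t)

/-- Finite-horizon standard discounted cost vector `V_T(π,R)`. -/
noncomputable def VT {m n : ℕ} (β : ℝ) (p : Fin m → Fin n → Fin m → ℝ)
    (π : ℕ → Matrix (Fin m) (Fin n) ℝ) (R : Matrix (Fin m) (Fin n) ℝ) (T : ℕ) :
    Fin m → ℝ :=
  fun x => ∑ t ∈ Finset.range T, β ^ t * (Ppi p π t *ᵥ Rvec R (π t)) x

/-- Infinite-horizon standard discounted cost vector `V(π,R)`. -/
noncomputable def Vinf {m n : ℕ} (β : ℝ) (p : Fin m → Fin n → Fin m → ℝ)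
    (π : ℕ → Matrix (Fin m) (Fin n) ℝ) (R : Matrix (Fin m) (Fin n) ℝ) :
    Fin m → ℝ :=
  fun x => ∑' t : ℕ, β ^ t * (Ppi p π t *ᵥ Rvec R (π t)) x

/-- `Qrev β γ p π R T k = Q_{T-1-k}^{T,π,R}`, defined by the backward recursion. -/
noncomputable def Qrev {m n : ℕ} (β γ : ℝ) (p : Fin m → Fin n → Fin m → ℝ)
    (π : ℕ → Matrix (Fin m) (Fin n) ℝ) (R : Matrix (Fin m) (Fin n) ℝ) (T : ℕ) :
    ℕ → Matrix (Fin m) (Fin n) ℝ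
  | 0 => fun s a => Real.exp (γ * β ^ (T - 1) * R s a)
  | k + 1 => fun s a =>
      Real.exp (γ * β ^ (T - 1 - (k + 1)) * R s a) *
        ∑ s', p s a s' * ∑ a', π (T - 1 - k) s' a' * Qrev β γ p π R T k s' a'

/-- `Q_t^{T,π,R}` for `0 ≤ t ≤ T-1`. -/
noncomputable def Qmat {m n : ℕ} (β γ : ℝ) (p : Fin m → Fin n → Fin m → ℝ)
    (π : ℕ → Matrix (Fin m) (Fin n) ℝ) (R : Matrix (Fin m) (Fin n) ℝ) (T t : ℕ) :
    Matrix (Fin m) (Fin n) ℝ :=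
  Qrev β γ p π R T (T - 1 - t)

/-- Finite-horizon risk-sensitive cost vector `J_T(π,γ,R)`. -/
noncomputable def JT {m n : ℕ} (β γ : ℝ) (p : Fin m → Fin n → Fin m → ℝ)
    (π : ℕ → Matrix (Fin m) (Fin n) ℝ) (R : Matrix (Fin m) (Fin n) ℝ) (T : ℕ) :
    Fin m → ℝ :=
  fun s => ∑ a, π 0 s a * Qmat β γ p π R T 0 s a

/-- Infinite-horizon risk-sensitive cost `J(π,γ,R)(x) = lim_{T→∞} J_T(π,γ,R)(x)`. -/
noncomputable def Jinf {m n : ℕ} (β γ : ℝ) (p : Fin m → Fin n → Fin m → ℝ)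
    (π : ℕ → Matrix (Fin m) (Fin n) ℝ) (R : Matrix (Fin m) (Fin n) ℝ) (x : Fin m) : ℝ :=
  limUnder atTop (fun T => JT β γ p π R T x)

/-- The metric `μ(π₁,π₂) = sup_t δ^t ‖d_t − f_t‖_∞` on Markovian randomized policies. -/
noncomputable def policyDist {m n : ℕ} (δ : ℝ)
    (π₁ π₂ : ℕ → Matrix (Fin m) (Fin n) ℝ) : ℝ :=
  ⨆ t : ℕ, δ ^ t * rowSumNorm (π₁ t - π₂ t)

section helpers
variable {m n : ℕ}

lemma dot_le {k : ℕ} {w v : Fin k → ℝ} {hi : ℝ}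
    (hw0 : ∀ i, 0 ≤ w i) (hw1 : ∑ i, w i = 1) (hv : ∀ i, v i ≤ hi) :
    ∑ i, w i * v i ≤ hi := by
  calc ∑ i, w i * v i ≤ ∑ i, w i * hi :=
        Finset.sum_le_sum fun i _ => mul_le_mul_of_nonneg_left (hv i) (hw0 i)
    _ = hi := by rw [← Finset.sum_mul, hw1, one_mul]

lemma le_dot {k : ℕ} {w v : Fin k → ℝ} {lo : ℝ}
    (hw0 : ∀ i, 0 ≤ w i) (hw1 : ∑ i, w i = 1) (hv : ∀ i, lo ≤ v i) :
    lo ≤ ∑ i, w i * v i := by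
  calc lo = ∑ i, w i * lo := by rw [← Finset.sum_mul, hw1, one_mul]
    _ ≤ ∑ i, w i * v i :=
        Finset.sum_le_sum fun i _ => mul_le_mul_of_nonneg_left (hv i) (hw0 i)

lemma dot_pos {k : ℕ} {w v : Fin k → ℝ}
    (hw0 : ∀ i, 0 ≤ w i) (hw1 : ∑ i, w i = 1) (hv : ∀ i, 0 < v i) :
    0 < ∑ i, w i * v i := by
  apply Finset.sum_pos' (fun i _ => mul_nonneg (hw0 i) (hv i).le)
  have h : ∃ i, 0 < w i := by
    by_contra h
    push_neg at h
    have : ∑ i, w i = 0 := Finset.sum_eq_zero fun i _ => le_antisymm (h i) (hw0 i)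
    rw [this] at hw1; norm_num at hw1
  obtain ⟨i, hi⟩ := h
  exact ⟨i, Finset.mem_univ i, mul_pos hi (hv i)⟩

lemma inner_smul (p : Fin m → Fin n → Fin m → ℝ) (d Q : Matrix (Fin m) (Fin n) ℝ)
    (c : ℝ) (s : Fin m) (a : Fin n) :
    ∑ s', p s a s' * ∑ a', d s' a' * (c * Q s' a')
      = c * ∑ s', p s a s' * ∑ a', d s' a' * Q s' a' := by
  rw [Finset.mul_sum]
  refine Finset.sum_congr rfl fun s' _ => ?_
  have h : ∑ a', d s' a' * (c * Q s' a') = c * ∑ a', d s' a' * Q s' a' := by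
    rw [Finset.mul_sum]; exact Finset.sum_congr rfl fun a' _ => by ring
  rw [h]; ring

lemma inner_le {p : Fin m → Fin n → Fin m → ℝ} (hp : IsTransKer m n p)
    {d : Matrix (Fin m) (Fin n) ℝ} (hd : IsStoch m n d)
    {Q : Matrix (Fin m) (Fin n) ℝ} {hi : ℝ} (hQ : ∀ s a, Q s a ≤ hi) (s : Fin m) (a : Fin n) :
    ∑ s', p s a s' * ∑ a', d s' a' * Q s' a' ≤ hi :=
  dot_le (fun s' => hp.1 s a s') (hp.2 s a)
    (fun s' => dot_le (fun a' => hd.1 s' a') (hd.2 s') (fun a' => hQ s' a'))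

lemma le_inner {p : Fin m → Fin n → Fin m → ℝ} (hp : IsTransKer m n p)
    {d : Matrix (Fin m) (Fin n) ℝ} (hd : IsStoch m n d)
    {Q : Matrix (Fin m) (Fin n) ℝ} {lo : ℝ} (hQ : ∀ s a, lo ≤ Q s a) (s : Fin m) (a : Fin n) :
    lo ≤ ∑ s', p s a s' * ∑ a', d s' a' * Q s' a' :=
  le_dot (fun s' => hp.1 s a s') (hp.2 s a)
    (fun s' => le_dot (fun a' => hd.1 s' a') (hd.2 s') (fun a' => hQ s' a'))

lemma inner_mono {p : Fin m → Fin n → Fin m → ℝ} (hp : IsTransKer m n p)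
    {d : Matrix (Fin m) (Fin n) ℝ} (hd : IsStoch m n d)
    {Q Q' : Matrix (Fin m) (Fin n) ℝ} (h : ∀ s a, Q s a ≤ Q' s a) (s : Fin m) (a : Fin n) :
    ∑ s', p s a s' * ∑ a', d s' a' * Q s' a'
      ≤ ∑ s', p s a s' * ∑ a', d s' a' * Q' s' a' := by
  refine Finset.sum_le_sum fun s' _ => mul_le_mul_of_nonneg_left ?_ (hp.1 s a s')
  exact Finset.sum_le_sum fun a' _ => mul_le_mul_of_nonneg_left (h s' a') (hd.1 s' a')

lemma qrev_pos {β γ : ℝ} {p : Fin m → Fin n → Fin m → ℝ} (hp : IsTransKer m n p)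
    {π : ℕ → Matrix (Fin m) (Fin n) ℝ} (hπ : ∀ t, IsStoch m n (π t))
    (R : Matrix (Fin m) (Fin n) ℝ) (T : ℕ) :
    ∀ k s a, 0 < Qrev β γ p π R T k s a := by
  intro k
  induction k with
  | zero => intro s a; exact Real.exp_pos _
  | succ k ih =>
    intro s a
    refine mul_pos (Real.exp_pos _) ?_
    exact dot_pos (fun s' => hp.1 s a s') (hp.2 s a)
      (fun s' => dot_pos (fun a' => (hπ _).1 s' a') ((hπ _).2 s') (fun a' => ih s' a'))

lemma exp_bound {β γ C : ℝ} (hβ0 : 0 < β) {R : Matrix (Fin m) (Fin n) ℝ}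
    (hR : ∀ s a, |R s a| ≤ C) (j : ℕ) (s : Fin m) (a : Fin n) :
    Real.exp (γ * β ^ j * R s a) ≤ Real.exp (|γ| * C * β ^ j) ∧
    Real.exp (-(|γ| * C * β ^ j)) ≤ Real.exp (γ * β ^ j * R s a) := by
  have hb : (0:ℝ) ≤ β ^ j := pow_nonneg hβ0.le j
  have habs : |γ * β ^ j * R s a| ≤ |γ| * C * β ^ j := by
    rw [abs_mul, abs_mul, abs_of_nonneg hb]
    have h1 : |γ| * β ^ j * |R s a| ≤ |γ| * β ^ j * C :=
      mul_le_mul_of_nonneg_left (hR s a) (mul_nonneg (abs_nonneg _) hb)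
    linarith [h1]
  constructor
  · exact Real.exp_le_exp.2 (le_trans (le_abs_self _) habs)
  · exact Real.exp_le_exp.2 (neg_le_of_abs_le habs)

lemma qrev_comp {β γ C : ℝ} (hβ0 : 0 < β) {p : Fin m → Fin n → Fin m → ℝ}
    (hp : IsTransKer m n p)
    {π : ℕ → Matrix (Fin m) (Fin n) ℝ} (hπ : ∀ t, IsStoch m n (π t))
    {R : Matrix (Fin m) (Fin n) ℝ} (hR : ∀ s a, |R s a| ≤ C) (T : ℕ) :
    ∀ k s a,
      Real.exp (-(|γ| * C * β ^ T)) * Qrev β γ p π R T k s a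
        ≤ Qrev β γ p π R (T + 1) (k + 1) s a ∧
      Qrev β γ p π R (T + 1) (k + 1) s a
        ≤ Real.exp (|γ| * C * β ^ T) * Qrev β γ p π R T k s a := by
  intro k
  induction k with
  | zero =>
    intro s a
    have hT1 : T + 1 - 1 - 1 = T - 1 := by omega
    have hT2 : T + 1 - 1 - 0 = T := by omega
    have hT3 : T + 1 - 1 = T := by omega
    have hk : Qrev β γ p π R (T + 1) 1 s a
        = Real.exp (γ * β ^ (T - 1) * R s a)
          * ∑ s', p s a s' * ∑ a', π T s' a' * Real.exp (γ * β ^ T * R s' a') := by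
      show Real.exp (γ * β ^ (T + 1 - 1 - (0 + 1)) * R s a) * _ = _
      rw [hT1, hT2]
      rfl
    have hQ0 : ∀ (s : Fin m) (a : Fin n),
        Qrev β γ p π R T 0 s a = Real.exp (γ * β ^ (T - 1) * R s a) := fun _ _ => rfl
    rw [hk, hQ0]
    have hin_le : ∑ s', p s a s' * ∑ a', π T s' a' * Real.exp (γ * β ^ T * R s' a')
        ≤ Real.exp (|γ| * C * β ^ T) :=
      inner_le hp (hπ T) (fun s' a' => (exp_bound hβ0 hR T s' a').1) s a
    have hin_ge : Real.exp (-(|γ| * C * β ^ T))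
        ≤ ∑ s', p s a s' * ∑ a', π T s' a' * Real.exp (γ * β ^ T * R s' a') :=
      le_inner hp (hπ T) (fun s' a' => (exp_bound hβ0 hR T s' a').2) s a
    have he : (0:ℝ) < Real.exp (γ * β ^ (T - 1) * R s a) := Real.exp_pos _
    constructor
    · rw [mul_comm]
      exact mul_le_mul_of_nonneg_left hin_ge he.le
    · rw [mul_comm (Real.exp (|γ| * C * β ^ T))]
      exact mul_le_mul_of_nonneg_left hin_le he.le
  | succ k ih =>
    intro s a
    have hT1 : T + 1 - 1 - (k + 1 + 1) = T - 1 - (k + 1) := by omega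
    have hT2 : T + 1 - 1 - (k + 1) = T - 1 - k := by omega
    have hlhs : Qrev β γ p π R (T + 1) (k + 1 + 1) s a
        = Real.exp (γ * β ^ (T - 1 - (k + 1)) * R s a)
          * ∑ s', p s a s' * ∑ a', π (T - 1 - k) s' a' * Qrev β γ p π R (T + 1) (k + 1) s' a' := by
      show Real.exp (γ * β ^ (T + 1 - 1 - (k + 1 + 1)) * R s a) * _ = _
      rw [hT1, hT2]
    have hrhs : Qrev β γ p π R T (k + 1) s a
        = Real.exp (γ * β ^ (T - 1 - (k + 1)) * R s a)
          * ∑ s', p s a s' * ∑ a', π (T - 1 - k) s' a' * Qrev β γ p π R T k s' a' := rfl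
    rw [hlhs, hrhs]
    have he : (0:ℝ) < Real.exp (γ * β ^ (T - 1 - (k + 1)) * R s a) := Real.exp_pos _
    constructor
    · have h1 : ∑ s', p s a s' * ∑ a', π (T - 1 - k) s' a'
          * (Real.exp (-(|γ| * C * β ^ T)) * Qrev β γ p π R T k s' a')
          ≤ ∑ s', p s a s' * ∑ a', π (T - 1 - k) s' a' * Qrev β γ p π R (T + 1) (k + 1) s' a' :=
        inner_mono hp (hπ _) (fun s' a' => (ih s' a').1) s a
      rw [inner_smul] at h1
      calc Real.exp (-(|γ| * C * β ^ T)) * (Real.exp (γ * β ^ (T - 1 - (k + 1)) * R s a)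
            * ∑ s', p s a s' * ∑ a', π (T - 1 - k) s' a' * Qrev β γ p π R T k s' a')
          = Real.exp (γ * β ^ (T - 1 - (k + 1)) * R s a)
            * (Real.exp (-(|γ| * C * β ^ T))
              * ∑ s', p s a s' * ∑ a', π (T - 1 - k) s' a' * Qrev β γ p π R T k s' a') := by ring
        _ ≤ _ := mul_le_mul_of_nonneg_left h1 he.le
    · have h1 : ∑ s', p s a s' * ∑ a', π (T - 1 - k) s' a' * Qrev β γ p π R (T + 1) (k + 1) s' a'
          ≤ ∑ s', p s a s' * ∑ a', π (T - 1 - k) s' a'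
            * (Real.exp (|γ| * C * β ^ T) * Qrev β γ p π R T k s' a') :=
        inner_mono hp (hπ _) (fun s' a' => (ih s' a').2) s a
      rw [inner_smul] at h1
      calc Real.exp (γ * β ^ (T - 1 - (k + 1)) * R s a)
            * ∑ s', p s a s' * ∑ a', π (T - 1 - k) s' a' * Qrev β γ p π R (T + 1) (k + 1) s' a'
          ≤ Real.exp (γ * β ^ (T - 1 - (k + 1)) * R s a)
            * (Real.exp (|γ| * C * β ^ T)
              * ∑ s', p s a s' * ∑ a', π (T - 1 - k) s' a' * Qrev β γ p π R T k s' a') :=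
            mul_le_mul_of_nonneg_left h1 he.le
        _ = _ := by ring

end helpers

section helpers2
variable {m n : ℕ}

lemma dot_smul {k : ℕ} (w v : Fin k → ℝ) (c : ℝ) :
    ∑ i, w i * (c * v i) = c * ∑ i, w i * v i := by
  rw [Finset.mul_sum]; exact Finset.sum_congr rfl fun i _ => by ring

lemma jt_pos {β γ : ℝ} {p : Fin m → Fin n → Fin m → ℝ} (hp : IsTransKer m n p)
    {π : ℕ → Matrix (Fin m) (Fin n) ℝ} (hπ : ∀ t, IsStoch m n (π t))
    (R : Matrix (Fin m) (Fin n) ℝ) (T : ℕ) (x : Fin m) :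
    0 < JT β γ p π R T x :=
  dot_pos (fun a => (hπ 0).1 x a) ((hπ 0).2 x)
    (fun a => qrev_pos hp hπ R T _ x a)

lemma jt_step {β γ C : ℝ} (hβ0 : 0 < β) {p : Fin m → Fin n → Fin m → ℝ}
    (hp : IsTransKer m n p)
    {π : ℕ → Matrix (Fin m) (Fin n) ℝ} (hπ : ∀ t, IsStoch m n (π t))
    {R : Matrix (Fin m) (Fin n) ℝ} (hR : ∀ s a, |R s a| ≤ C)
    (T : ℕ) (hT : 1 ≤ T) (x : Fin m) :
    Real.exp (-(|γ| * C * β ^ T)) * JT β γ p π R T x ≤ JT β γ p π R (T + 1) x ∧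
    JT β γ p π R (T + 1) x ≤ Real.exp (|γ| * C * β ^ T) * JT β γ p π R T x := by
  obtain ⟨T', rfl⟩ : ∃ T', T = T' + 1 := ⟨T - 1, by omega⟩
  have hq := qrev_comp (γ := γ) hβ0 hp hπ hR (T' + 1) T'
  have hJ1 : JT β γ p π R (T' + 1) x = ∑ a, π 0 x a * Qrev β γ p π R (T' + 1) T' x a := rfl
  have hJ2 : JT β γ p π R (T' + 1 + 1) x
      = ∑ a, π 0 x a * Qrev β γ p π R (T' + 1 + 1) (T' + 1) x a := rfl
  rw [hJ1, hJ2]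
  constructor
  · rw [← dot_smul (fun a => π 0 x a) (fun a => Qrev β γ p π R (T' + 1) T' x a)]
    exact Finset.sum_le_sum fun a _ =>
      mul_le_mul_of_nonneg_left (hq x a).1 ((hπ 0).1 x a)
  · rw [← dot_smul (fun a => π 0 x a) (fun a => Qrev β γ p π R (T' + 1) T' x a)]
    exact Finset.sum_le_sum fun a _ =>
      mul_le_mul_of_nonneg_left (hq x a).2 ((hπ 0).1 x a)

end helpers2

section helpers3
variable {m n : ℕ}

lemma jt_main {β γ C : ℝ} (hβ0 : 0 < β) (hβ1 : β < 1)
    {p : Fin m → Fin n → Fin m → ℝ} (hp : IsTransKer m n p)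
    {π : ℕ → Matrix (Fin m) (Fin n) ℝ} (hπ : ∀ t, IsStoch m n (π t))
    {R : Matrix (Fin m) (Fin n) ℝ} (hR : ∀ s a, |R s a| ≤ C) (hC : 0 ≤ C) (x : Fin m) :
    Filter.Tendsto (fun T => JT β γ p π R T x) Filter.atTop (nhds (Jinf β γ p π R x)) ∧
    ∀ b : ℝ, ∀ T : ℕ, 1 ≤ T →
      JT β γ p π R T x ≤ b * Real.exp (-(|γ| * (C / (1 - β)) * β ^ T)) →
      Jinf β γ p π R x ≤ b := by
  have h1β : (0:ℝ) < 1 - β := by linarith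
  set c : ℕ → ℝ := fun T => |γ| * (C / (1 - β)) * β ^ T with hc
  have hK : C / (1 - β) * (1 - β) = C := div_mul_cancel₀ _ (ne_of_gt h1β)
  have hcsub : ∀ T : ℕ, |γ| * C * β ^ T = c T - c (T + 1) := by
    intro T
    simp only [hc]
    have hne : (1:ℝ) - β ≠ 0 := ne_of_gt h1β
    field_simp
    ring
  have hcnn : ∀ T, 0 ≤ c T := fun T =>
    mul_nonneg (mul_nonneg (abs_nonneg _) (div_nonneg hC h1β.le)) (pow_nonneg hβ0.le T)
  set A : ℕ → ℝ := fun T => JT β γ p π R T x * Real.exp (-(c T)) with hA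
  set B : ℕ → ℝ := fun T => JT β γ p π R T x * Real.exp (c T) with hB
  have hBstep : ∀ T, 1 ≤ T → B (T + 1) ≤ B T := by
    intro T hT
    have h := (jt_step (γ := γ) hβ0 hp hπ hR T hT x).2
    have := mul_le_mul_of_nonneg_right h (Real.exp_pos (c (T + 1))).le
    calc B (T + 1) = JT β γ p π R (T + 1) x * Real.exp (c (T + 1)) := rfl
      _ ≤ Real.exp (|γ| * C * β ^ T) * JT β γ p π R T x * Real.exp (c (T + 1)) := this
      _ = JT β γ p π R T x * (Real.exp (c T - c (T + 1)) * Real.exp (c (T + 1))) := by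
          rw [hcsub T]; ring
      _ = B T := by rw [← Real.exp_add, sub_add_cancel]
  have hAstep : ∀ T, 1 ≤ T → A T ≤ A (T + 1) := by
    intro T hT
    have h := (jt_step (γ := γ) hβ0 hp hπ hR T hT x).1
    have := mul_le_mul_of_nonneg_right h (Real.exp_pos (-(c (T + 1)))).le
    calc A T = JT β γ p π R T x * (Real.exp (-(c T - c (T + 1))) * Real.exp (-(c (T + 1)))) := by
          rw [← Real.exp_add]; show JT β γ p π R T x * Real.exp (-c T) = _; congr 2; ring
      _ = Real.exp (-(|γ| * C * β ^ T)) * JT β γ p π R T x * Real.exp (-(c (T + 1))) := by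
          rw [hcsub T]; ring
      _ ≤ JT β γ p π R (T + 1) x * Real.exp (-(c (T + 1))) := this
      _ = A (T + 1) := rfl
  have hAB : ∀ T, A T ≤ B T := fun T =>
    mul_le_mul_of_nonneg_left (Real.exp_le_exp.2 (by linarith [hcnn T]))
      (jt_pos hp hπ R T x).le
  have hBle : ∀ T, 1 ≤ T → ∀ S, T ≤ S → B S ≤ B T := by
    intro T hT S hS
    induction S, hS using Nat.le_induction with
    | base => exact le_rfl
    | succ S hS ih => exact le_trans (hBstep S (le_trans hT hS)) ih
  have hAle : ∀ T, 1 ≤ T → ∀ S, T ≤ S → A T ≤ A S := by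
    intro T hT S hS
    induction S, hS using Nat.le_induction with
    | base => exact le_rfl
    | succ S hS ih => exact le_trans ih (hAstep S (le_trans hT hS))
  have hmono : Monotone (fun S => A (S + 1)) := by
    apply monotone_nat_of_le_succ
    intro S
    exact hAstep (S + 1) (by omega)
  have hbdd : BddAbove (Set.range fun S => A (S + 1)) := by
    refine ⟨B 1, ?_⟩
    rintro y ⟨S, rfl⟩
    exact le_trans (hAB (S + 1)) (hBle 1 le_rfl (S + 1) (by omega))
  have htend0 : Filter.Tendsto (fun S => A (S + 1)) atTop (nhds (⨆ S, A (S + 1))) :=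
    tendsto_atTop_ciSup hmono hbdd
  set L : ℝ := ⨆ S, A (S + 1) with hL
  have hc0 : Filter.Tendsto (fun S : ℕ => c (S + 1)) atTop (nhds 0) := by
    have h1 : Filter.Tendsto (fun T : ℕ => β ^ T) atTop (nhds 0) :=
      tendsto_pow_atTop_nhds_zero_of_lt_one hβ0.le hβ1
    have h2 : Filter.Tendsto (fun T : ℕ => |γ| * (C / (1 - β)) * β ^ T) atTop (nhds 0) := by
      have := h1.const_mul (|γ| * (C / (1 - β)))
      simpa using this
    exact h2.comp (tendsto_add_atTop_nat 1)
  have hexp1 : Filter.Tendsto (fun S : ℕ => Real.exp (c (S + 1))) atTop (nhds 1) := by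
    have := (Real.continuous_exp.tendsto 0).comp hc0
    simpa [Function.comp_def] using this
  have htendJ1 : Filter.Tendsto (fun S => JT β γ p π R (S + 1) x) atTop (nhds L) := by
    have h := htend0.mul hexp1
    rw [mul_one] at h
    convert h using 2 with S
    show JT β γ p π R (S + 1) x = A (S + 1) * Real.exp (c (S + 1))
    rw [hA]
    simp only []
    rw [mul_assoc, ← Real.exp_add, neg_add_cancel, Real.exp_zero, mul_one]
  have htendJ : Filter.Tendsto (fun T => JT β γ p π R T x) atTop (nhds L) :=
    (Filter.tendsto_add_atTop_iff_nat 1).mp htendJ1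
  have hJinf : Jinf β γ p π R x = L := htendJ.limUnder_eq
  constructor
  · rw [hJinf]; exact htendJ
  · intro b T hT hb
    rw [hJinf]
    refine le_of_tendsto htendJ (Filter.eventually_atTop.2 ⟨T, fun S hS => ?_⟩)
    have hBT : B T ≤ b := by
      have := mul_le_mul_of_nonneg_right hb (Real.exp_pos (c T)).le
      calc B T = JT β γ p π R T x * Real.exp (c T) := rfl
        _ ≤ b * Real.exp (-(c T)) * Real.exp (c T) := this
        _ = b := by rw [mul_assoc, ← Real.exp_add, neg_add_cancel, Real.exp_zero, mul_one]
    have hJS : JT β γ p π R S x ≤ B S := by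
      have h1 : (1:ℝ) ≤ Real.exp (c S) := Real.one_le_exp (hcnn S)
      calc JT β γ p π R S x = JT β γ p π R S x * 1 := (mul_one _).symm
        _ ≤ JT β γ p π R S x * Real.exp (c S) :=
            mul_le_mul_of_nonneg_left h1 (jt_pos hp hπ R S x).le
    exact le_trans hJS (le_trans (hBle T hT S hS) hBT)

end helpers3

section helpers4
variable {m n : ℕ}

lemma pmat_stoch {p : Fin m → Fin n → Fin m → ℝ} (hp : IsTransKer m n p)
    {d : Matrix (Fin m) (Fin n) ℝ} (hd : IsStoch m n d) :
    (∀ s s', 0 ≤ Pmat p d s s') ∧ ∀ s, ∑ s', Pmat p d s s' = 1 := by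
  constructor
  · intro s s'
    exact Finset.sum_nonneg fun a _ => mul_nonneg (hp.1 s a s') (hd.1 s a)
  · intro s
    show ∑ s', ∑ a, p s a s' * d s a = 1
    rw [Finset.sum_comm]
    have h : ∀ a : Fin n, ∑ s', p s a s' * d s a = d s a := by
      intro a
      rw [← Finset.sum_mul, hp.2 s a, one_mul]
    rw [Finset.sum_congr rfl fun a _ => h a, hd.2 s]

lemma ppi_stoch {p : Fin m → Fin n → Fin m → ℝ} (hp : IsTransKer m n p)
    {π : ℕ → Matrix (Fin m) (Fin n) ℝ} (hπ : ∀ t, IsStoch m n (π t)) (t : ℕ) :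
    (∀ s s', 0 ≤ Ppi p π t s s') ∧ ∀ s, ∑ s', Ppi p π t s s' = 1 := by
  induction t with
  | zero =>
    constructor
    · intro s s'
      show (0:ℝ) ≤ (1 : Matrix (Fin m) (Fin m) ℝ) s s'
      rw [Matrix.one_apply]
      split <;> norm_num
    · intro s
      show ∑ s', (1 : Matrix (Fin m) (Fin m) ℝ) s s' = 1
      simp [Matrix.one_apply]
  | succ t ih =>
    have hPm := pmat_stoch hp (hπ t)
    constructor
    · intro s s'
      show (0:ℝ) ≤ (Ppi p π t * Pmat p (π t)) s s'
      rw [Matrix.mul_apply]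
      exact Finset.sum_nonneg fun j _ => mul_nonneg (ih.1 s j) (hPm.1 j s')
    · intro s
      show ∑ s', (Ppi p π t * Pmat p (π t)) s s' = 1
      simp only [Matrix.mul_apply]
      rw [Finset.sum_comm]
      have h : ∀ j : Fin m, ∑ s', Ppi p π t s j * Pmat p (π t) j s' = Ppi p π t s j := by
        intro j
        rw [← Finset.mul_sum, hPm.2 j, mul_one]
      rw [Finset.sum_congr rfl fun j _ => h j, ih.2 s]

lemma rvec_bound {C : ℝ} {R : Matrix (Fin m) (Fin n) ℝ} (hR : ∀ s a, |R s a| ≤ C)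
    {d : Matrix (Fin m) (Fin n) ℝ} (hd : IsStoch m n d) (s : Fin m) :
    |Rvec R d s| ≤ C := by
  rw [abs_le]
  have hle : ∀ a : Fin n, R s a ≤ C := fun a => (abs_le.1 (hR s a)).2
  have hge : ∀ a : Fin n, -C ≤ R s a := fun a => (abs_le.1 (hR s a)).1
  constructor
  · calc -C = ∑ a, d s a * (-C) := by rw [← Finset.sum_mul, hd.2 s, one_mul]
      _ ≤ ∑ a, R s a * d s a := Finset.sum_le_sum fun a _ => by
          have := mul_le_mul_of_nonneg_right (hge a) (hd.1 s a)
          linarith [this]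
  · calc Rvec R d s = ∑ a, R s a * d s a := rfl
      _ ≤ ∑ a, C * d s a := Finset.sum_le_sum fun a _ => by
          have := mul_le_mul_of_nonneg_right (hle a) (hd.1 s a)
          linarith [this]
      _ = C := by rw [← Finset.mul_sum, hd.2 s, mul_one]

lemma mulvec_bound {C : ℝ} {p : Fin m → Fin n → Fin m → ℝ} (hp : IsTransKer m n p)
    {π : ℕ → Matrix (Fin m) (Fin n) ℝ} (hπ : ∀ t, IsStoch m n (π t))
    {R : Matrix (Fin m) (Fin n) ℝ} (hR : ∀ s a, |R s a| ≤ C) (t : ℕ) (x : Fin m) :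
    |(Ppi p π t *ᵥ Rvec R (π t)) x| ≤ C := by
  have hP := ppi_stoch hp hπ t
  have hmv : (Ppi p π t *ᵥ Rvec R (π t)) x = ∑ s', Ppi p π t x s' * Rvec R (π t) s' := by
    simp [Matrix.mulVec, dotProduct]
  rw [hmv, abs_le]
  constructor
  · exact le_dot (fun s' => hP.1 x s') (hP.2 x)
      (fun s' => (abs_le.1 (rvec_bound hR (hπ t) s')).1)
  · exact dot_le (fun s' => hP.1 x s') (hP.2 x)
      (fun s' => (abs_le.1 (rvec_bound hR (hπ t) s')).2)

end helpers4

/-- the truncated-from-below constraint sets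
`A_T = {π : V_T(π,R)(x) ≤ b − Kβ^T}` and `B_T = {π : J_T(π,γ,R)(x) ≤ b·exp(−|γ|Kβ^T)}`
are non-decreasing in `T`, every member of `A_T` satisfies `V(π,R)(x) ≤ b`, and every
member of `B_T` satisfies `J(π,γ,R)(x) ≤ b` (where `J` is the limit of the `J_T`, which
exists). -/
theorem stmt_14 (m n : ℕ) (hm : 1 ≤ m) (hn : 1 ≤ n)
    (p : Fin m → Fin n → Fin m → ℝ) (hp : IsTransKer m n p)
    (β : ℝ) (hβ0 : 0 < β) (hβ1 : β < 1)
    (γ : ℝ) (hγ : γ ≠ 0)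
    (C : ℝ) (hC : 0 < C)
    (R : Matrix (Fin m) (Fin n) ℝ) (hR : ∀ s a, |R s a| ≤ C)
    (b : ℝ) (x : Fin m) :
    (∀ π : ℕ → Matrix (Fin m) (Fin n) ℝ, (∀ t, IsStoch m n (π t)) →
      Filter.Tendsto (fun T => JT β γ p π R T x) Filter.atTop (nhds (Jinf β γ p π R x))) ∧
    ∀ T : ℕ, 1 ≤ T → ∀ π : ℕ → Matrix (Fin m) (Fin n) ℝ, (∀ t, IsStoch m n (π t)) →
      (VT β p π R T x ≤ b - C / (1 - β) * β ^ T →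
        VT β p π R (T + 1) x ≤ b - C / (1 - β) * β ^ (T + 1)) ∧
      (JT β γ p π R T x ≤ b * Real.exp (-(|γ| * (C / (1 - β)) * β ^ T)) →
        JT β γ p π R (T + 1) x ≤ b * Real.exp (-(|γ| * (C / (1 - β)) * β ^ (T + 1)))) ∧
      (VT β p π R T x ≤ b - C / (1 - β) * β ^ T → Vinf β p π R x ≤ b) ∧
      (JT β γ p π R T x ≤ b * Real.exp (-(|γ| * (C / (1 - β)) * β ^ T)) →
        Jinf β γ p π R x ≤ b) := by
  have h1β : (0:ℝ) < 1 - β := by linarith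
  have hne : (1:ℝ) - β ≠ 0 := ne_of_gt h1β
  constructor
  · intro π hπ
    exact (jt_main hβ0 hβ1 hp hπ hR hC.le x).1
  · intro T hT π hπ
    have hw := fun t => mulvec_bound hp hπ hR t x
    have hbpow : ∀ t : ℕ, (0:ℝ) ≤ β ^ t := fun t => pow_nonneg hβ0.le t
    refine ⟨?_, ?_, ?_, ?_⟩
    · intro h
      have hVsucc : VT β p π R (T + 1) x
          = VT β p π R T x + β ^ T * (Ppi p π T *ᵥ Rvec R (π T)) x := by
        show ∑ t ∈ Finset.range (T + 1), β ^ t * (Ppi p π t *ᵥ Rvec R (π t)) x = _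
        rw [Finset.sum_range_succ]
        rfl
      rw [hVsucc]
      have hwT : β ^ T * (Ppi p π T *ᵥ Rvec R (π T)) x ≤ C * β ^ T := by
        have h2 := (abs_le.1 (hw T)).2
        nlinarith [hbpow T]
      have heq : b - C / (1 - β) * β ^ T + C * β ^ T = b - C / (1 - β) * β ^ (T + 1) := by
        field_simp
        ring
      linarith
    · intro h
      have hstep := (jt_step (γ := γ) hβ0 hp hπ hR T hT x).2
      have hexp : Real.exp (|γ| * C * β ^ T)
          * Real.exp (-(|γ| * (C / (1 - β)) * β ^ T))
          = Real.exp (-(|γ| * (C / (1 - β)) * β ^ (T + 1))) := by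
        rw [← Real.exp_add]
        congr 1
        field_simp
        ring
      calc JT β γ p π R (T + 1) x
          ≤ Real.exp (|γ| * C * β ^ T) * JT β γ p π R T x := hstep
        _ ≤ Real.exp (|γ| * C * β ^ T)
            * (b * Real.exp (-(|γ| * (C / (1 - β)) * β ^ T))) :=
            mul_le_mul_of_nonneg_left h (Real.exp_pos _).le
        _ = b * (Real.exp (|γ| * C * β ^ T)
            * Real.exp (-(|γ| * (C / (1 - β)) * β ^ T))) := by ring
        _ = b * Real.exp (-(|γ| * (C / (1 - β)) * β ^ (T + 1))) := by rw [hexp]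
    · intro h
      have hsumgeo : Summable (fun t : ℕ => C * β ^ t) :=
        (summable_geometric_of_lt_one hβ0.le hβ1).mul_left C
      have habs : ∀ t : ℕ, ‖β ^ t * (Ppi p π t *ᵥ Rvec R (π t)) x‖ ≤ C * β ^ t := by
        intro t
        rw [Real.norm_eq_abs, abs_mul, abs_of_nonneg (hbpow t)]
        nlinarith [hw t, hbpow t, abs_nonneg ((Ppi p π t *ᵥ Rvec R (π t)) x)]
      have hsum : Summable (fun t : ℕ => β ^ t * (Ppi p π t *ᵥ Rvec R (π t)) x) :=
        Summable.of_norm_bounded hsumgeo habs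
      have hsplit := Summable.sum_add_tsum_nat_add T hsum
      have hVinf : Vinf β p π R x
          = VT β p π R T x + ∑' i : ℕ, β ^ (i + T) * (Ppi p π (i + T) *ᵥ Rvec R (π (i + T))) x := by
        exact hsplit.symm
      have hsumg2 : Summable (fun i : ℕ => C * β ^ T * β ^ i) :=
        (summable_geometric_of_lt_one hβ0.le hβ1).mul_left (C * β ^ T)
      have hsumtail : Summable (fun i : ℕ => β ^ (i + T) * (Ppi p π (i + T) *ᵥ Rvec R (π (i + T))) x) := by
        refine Summable.of_norm_bounded hsumg2 fun i => ?_
        rw [Real.norm_eq_abs, abs_mul, abs_of_nonneg (hbpow (i + T))]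
        have h2 := hw (i + T)
        have hp1 : β ^ (i + T) = β ^ i * β ^ T := pow_add β i T
        nlinarith [hbpow i, hbpow T, hbpow (i + T), abs_nonneg ((Ppi p π (i + T) *ᵥ Rvec R (π (i + T))) x), abs_le.1 h2]
      have htail : ∑' i : ℕ, β ^ (i + T) * (Ppi p π (i + T) *ᵥ Rvec R (π (i + T))) x
          ≤ C / (1 - β) * β ^ T := by
        have hle : ∀ i : ℕ, β ^ (i + T) * (Ppi p π (i + T) *ᵥ Rvec R (π (i + T))) x
            ≤ C * β ^ T * β ^ i := by
          intro i
          have h2 := (abs_le.1 (hw (i + T))).2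
          have hp1 : β ^ (i + T) = β ^ i * β ^ T := pow_add β i T
          nlinarith [hbpow i, hbpow T, hbpow (i + T)]
        calc ∑' i : ℕ, β ^ (i + T) * (Ppi p π (i + T) *ᵥ Rvec R (π (i + T))) x
            ≤ ∑' i : ℕ, C * β ^ T * β ^ i := Summable.tsum_le_tsum hle hsumtail hsumg2
          _ = C * β ^ T * (1 - β)⁻¹ := by
              rw [tsum_mul_left, tsum_geometric_of_lt_one hβ0.le hβ1]
          _ = C / (1 - β) * β ^ T := by rw [div_eq_mul_inv]; ring
      rw [hVinf]
      linarith [htail, h]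
    · intro h
      exact (jt_main hβ0 hβ1 hp hπ hR hC.le x).2 b T hT h
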